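/- Let K be a compact Hausdorff space and let 𝔯(K) (the reaping number of K) be the least cardinality of a family ℱ of nonempty open subsets of K such that for every pair of disjoint closed sets L₁, L₂ there is W ∈ ℱ with W ∩ L₁ = ∅ or W ∩ L₂ = ∅. Then 𝔯(K) equals the least cardinality of a family ℱ of nonempty open sets such that for every three pairwise disjoint closed sets L₁, L₂, L₃ there exists W ∈ ℱ with W ∩ L_i = ∅ for some i ∈ {1,2,3}. -/
import Mathlib


universe u

/-- A reaping family in a topological space `K`: a family of nonempty open sets such
that every pair of disjoint closed sets is "reaped" by a member of the family. -/
def IsReapingFamily {K : Type u} [TopologicalSpace K] (F : Set (Set K)) : Prop :=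
  (∀ W ∈ F, IsOpen W ∧ W.Nonempty) ∧
    ∀ L₁ L₂ : Set K, IsClosed L₁ → IsClosed L₂ → Disjoint L₁ L₂ →
      ∃ W ∈ F, W ∩ L₁ = ∅ ∨ W ∩ L₂ = ∅

/-- The reaping number `𝔯(K)`: the least cardinality of a reaping family in `K`. -/
noncomputable def reapingNumber (K : Type u) [TopologicalSpace K] : Cardinal.{u} :=
  ⨅ F : {F : Set (Set K) // IsReapingFamily F}, Cardinal.mk F.1

/-- The three-set reaping property. -/
def IsTripleFamily {K : Type u} [TopologicalSpace K] (F : Set (Set K)) : Prop :=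
  (∀ W ∈ F, IsOpen W ∧ W.Nonempty) ∧
    ∀ L₁ L₂ L₃ : Set K, IsClosed L₁ → IsClosed L₂ → IsClosed L₃ →
      Disjoint L₁ L₂ → Disjoint L₁ L₃ → Disjoint L₂ L₃ →
      ∃ W ∈ F, W ∩ L₁ = ∅ ∨ W ∩ L₂ = ∅ ∨ W ∩ L₃ = ∅

/-- Every reaping family is a triple family. -/
lemma IsReapingFamily.isTripleFamily {K : Type u} [TopologicalSpace K] {F : Set (Set K)}
    (h : IsReapingFamily F) : IsTripleFamily F := by
  refine ⟨h.1, fun L₁ L₂ L₃ h₁ h₂ _ h12 _ _ => ?_⟩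
  obtain ⟨W, hW, hc⟩ := h.2 L₁ L₂ h₁ h₂ h12
  exact ⟨W, hW, hc.imp id Or.inl⟩

/-- From a triple family one can construct a reaping family of no larger cardinality. -/
lemma exists_reaping_of_triple {K : Type u} [TopologicalSpace K] [CompactSpace K]
    [T2Space K] (F : Set (Set K)) (h : IsTripleFamily F) :
    ∃ G : Set (Set K), IsReapingFamily G ∧ Cardinal.mk G ≤ Cardinal.mk F := by
  by_cases hcase : ∃ C₁ C₂ : Set K, IsClosed C₁ ∧ IsClosed C₂ ∧ Disjoint C₁ C₂ ∧
      (∀ W ∈ F, (closure W ∩ C₁).Nonempty) ∧ (∀ W ∈ F, (closure W ∩ C₂).Nonempty)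
  · -- Case I: two disjoint "cl-blocking" closed sets exist.
    obtain ⟨C₁, C₂, hC₁, hC₂, hC12, hb₁, hb₂⟩ := hcase
    obtain ⟨U, V, hU, hV, hC₁U, hC₂V, hUV⟩ := NormalSpace.normal C₁ C₂ hC₁ hC₂ hC12
    obtain ⟨P, hP, hC₂P, hPV⟩ := normal_exists_closure_subset hC₂ hV hC₂V
    refine ⟨(fun W => W ∩ U) '' F, ⟨?_, ?_⟩, Cardinal.mk_image_le⟩
    · rintro _ ⟨W, hWF, rfl⟩
      refine ⟨((h.1 W hWF).1).inter hU, ?_⟩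
      obtain ⟨z, hzW, hzC₁⟩ := hb₁ W hWF
      obtain ⟨x, hxU, hxW⟩ := mem_closure_iff.mp hzW U hU (hC₁U hzC₁)
      exact ⟨x, hxW, hxU⟩
    · intro L₁ L₂ hL₁ hL₂ hL12
      set X₁ := closure (L₁ \ V) with hX₁def
      set X₂ := closure (L₂ \ V) with hX₂def
      have hX₁L : X₁ ⊆ L₁ := closure_minimal Set.diff_subset hL₁
      have hX₂L : X₂ ⊆ L₂ := closure_minimal Set.diff_subset hL₂
      have hX₁V : X₁ ⊆ Vᶜ :=
        closure_minimal (fun x hx => hx.2) (isClosed_compl_iff.mpr hV)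
      have hX₂V : X₂ ⊆ Vᶜ :=
        closure_minimal (fun x hx => hx.2) (isClosed_compl_iff.mpr hV)
      have hZV : closure P ⊆ V := hPV
      have d12 : Disjoint X₁ X₂ := hL12.mono hX₁L hX₂L
      have d13 : Disjoint X₁ (closure P) := (disjoint_compl_left).mono hX₁V hZV
      have d23 : Disjoint X₂ (closure P) := (disjoint_compl_left).mono hX₂V hZV
      obtain ⟨W, hWF, hcases⟩ := h.2 X₁ X₂ (closure P) isClosed_closure isClosed_closure
        isClosed_closure d12 d13 d23
      -- auxiliary facts about this W
      have hWU : (W ∩ U).Nonempty := by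
        obtain ⟨z, hzW, hzC₁⟩ := hb₁ W hWF
        obtain ⟨x, hxU, hxW⟩ := mem_closure_iff.mp hzW U hU (hC₁U hzC₁)
        exact ⟨x, hxW, hxU⟩
      have hWP : (W ∩ closure P).Nonempty := by
        obtain ⟨z, hzW, hzC₂⟩ := hb₂ W hWF
        obtain ⟨x, hxP, hxW⟩ := mem_closure_iff.mp hzW P hP (hC₂P hzC₂)
        exact ⟨x, hxW, subset_closure hxP⟩
      rcases hcases with hc1 | hc2 | hc3
      · refine ⟨W ∩ U, Set.mem_image_of_mem _ hWF, Or.inl ?_⟩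
        apply Set.eq_empty_iff_forall_notMem.mpr
        rintro x ⟨⟨hxW, hxU⟩, hxL⟩
        by_cases hxV : x ∈ V
        · exact Set.disjoint_left.mp hUV hxU hxV
        · have hxX : x ∈ X₁ := subset_closure ⟨hxL, hxV⟩
          exact Set.eq_empty_iff_forall_notMem.mp hc1 x ⟨hxW, hxX⟩
      · refine ⟨W ∩ U, Set.mem_image_of_mem _ hWF, Or.inr ?_⟩
        apply Set.eq_empty_iff_forall_notMem.mpr
        rintro x ⟨⟨hxW, hxU⟩, hxL⟩
        by_cases hxV : x ∈ V
        · exact Set.disjoint_left.mp hUV hxU hxV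
        · have hxX : x ∈ X₂ := subset_closure ⟨hxL, hxV⟩
          exact Set.eq_empty_iff_forall_notMem.mp hc2 x ⟨hxW, hxX⟩
      · exact absurd hc3 (by
          obtain ⟨x, hx⟩ := hWP
          exact fun hemp => Set.eq_empty_iff_forall_notMem.mp hemp x hx)
  · -- Case II: no disjoint pair of cl-blocking closed sets; F itself reaps pairs.
    refine ⟨F, ⟨h.1, ?_⟩, le_rfl⟩
    intro L₁ L₂ hL₁ hL₂ hd
    have hnot : ¬((∀ W ∈ F, (closure W ∩ L₁).Nonempty) ∧
        (∀ W ∈ F, (closure W ∩ L₂).Nonempty)) :=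
      fun ⟨a, b⟩ => hcase ⟨L₁, L₂, hL₁, hL₂, hd, a, b⟩
    rcases not_and_or.mp hnot with hn | hn
    · push_neg at hn
      obtain ⟨W, hWF, hem⟩ := hn
      have hempty : closure W ∩ L₁ = ∅ := hem
      refine ⟨W, hWF, Or.inl ?_⟩
      apply Set.eq_empty_iff_forall_notMem.mpr
      rintro x ⟨hxW, hxL⟩
      exact Set.eq_empty_iff_forall_notMem.mp hempty x ⟨subset_closure hxW, hxL⟩
    · push_neg at hn
      obtain ⟨W, hWF, hem⟩ := hn
      have hempty : closure W ∩ L₂ = ∅ := hem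
      refine ⟨W, hWF, Or.inr ?_⟩
      apply Set.eq_empty_iff_forall_notMem.mpr
      rintro x ⟨hxW, hxL⟩
      exact Set.eq_empty_iff_forall_notMem.mp hempty x ⟨subset_closure hxW, hxL⟩

/-- The reaping number of a compact Hausdorff space equals the least cardinality of a
family of nonempty open sets reaping every triple of pairwise disjoint closed sets. -/
theorem reapingNumber_eq_three_sets (K : Type u) [TopologicalSpace K] [CompactSpace K]
    [T2Space K] :
    reapingNumber K =
      ⨅ F : {F : Set (Set K) //
        (∀ W ∈ F, IsOpen W ∧ W.Nonempty) ∧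
          ∀ L₁ L₂ L₃ : Set K, IsClosed L₁ → IsClosed L₂ → IsClosed L₃ →
            Disjoint L₁ L₂ → Disjoint L₁ L₃ → Disjoint L₂ L₃ →
            ∃ W ∈ F, W ∩ L₁ = ∅ ∨ W ∩ L₂ = ∅ ∨ W ∩ L₃ = ∅}, Cardinal.mk F.1 := by
  have hTsub : ∀ F : Set (Set K),
      ((∀ W ∈ F, IsOpen W ∧ W.Nonempty) ∧
        ∀ L₁ L₂ L₃ : Set K, IsClosed L₁ → IsClosed L₂ → IsClosed L₃ →
          Disjoint L₁ L₂ → Disjoint L₁ L₃ → Disjoint L₂ L₃ →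
          ∃ W ∈ F, W ∩ L₁ = ∅ ∨ W ∩ L₂ = ∅ ∨ W ∩ L₃ = ∅) ↔ IsTripleFamily F :=
    fun F => Iff.rfl
  rcases isEmpty_or_nonempty {F : Set (Set K) // IsTripleFamily F} with hemp | hne
  · -- no triple family, hence no reaping family; both infima are over empty types
    have hre : IsEmpty {F : Set (Set K) // IsReapingFamily F} :=
      ⟨fun ⟨F, hF⟩ => hemp.false ⟨F, hF.isTripleFamily⟩⟩
    have hte : IsEmpty {F : Set (Set K) //
        (∀ W ∈ F, IsOpen W ∧ W.Nonempty) ∧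
          ∀ L₁ L₂ L₃ : Set K, IsClosed L₁ → IsClosed L₂ → IsClosed L₃ →
            Disjoint L₁ L₂ → Disjoint L₁ L₃ → Disjoint L₂ L₃ →
            ∃ W ∈ F, W ∩ L₁ = ∅ ∨ W ∩ L₂ = ∅ ∨ W ∩ L₃ = ∅} :=
      ⟨fun ⟨F, hF⟩ => hemp.false ⟨F, hF⟩⟩
    rw [reapingNumber, iInf, iInf, Set.range_eq_empty, Set.range_eq_empty]
  · have hnr : Nonempty {F : Set (Set K) // IsReapingFamily F} := by
      obtain ⟨⟨F, hF⟩⟩ := hne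
      obtain ⟨G, hG, _⟩ := exists_reaping_of_triple F hF
      exact ⟨⟨G, hG⟩⟩
    have hnt : Nonempty {F : Set (Set K) //
        (∀ W ∈ F, IsOpen W ∧ W.Nonempty) ∧
          ∀ L₁ L₂ L₃ : Set K, IsClosed L₁ → IsClosed L₂ → IsClosed L₃ →
            Disjoint L₁ L₂ → Disjoint L₁ L₃ → Disjoint L₂ L₃ →
            ∃ W ∈ F, W ∩ L₁ = ∅ ∨ W ∩ L₂ = ∅ ∨ W ∩ L₃ = ∅} := by
      obtain ⟨⟨F, hF⟩⟩ := hne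
      exact ⟨⟨F, hF⟩⟩
    apply le_antisymm
    · apply le_ciInf
      rintro ⟨F, hF⟩
      obtain ⟨G, hG, hle⟩ := exists_reaping_of_triple F hF
      exact le_trans
        (ciInf_le_of_le (OrderBot.bddBelow _) (⟨G, hG⟩ :
          {F : Set (Set K) // IsReapingFamily F}) le_rfl) hle
    · apply le_ciInf
      rintro ⟨F, hF⟩
      exact ciInf_le_of_le (OrderBot.bddBelow _)
        (⟨F, hF.isTripleFamily⟩ : {F : Set (Set K) //
          (∀ W ∈ F, IsOpen W ∧ W.Nonempty) ∧
            ∀ L₁ L₂ L₃ : Set K, IsClosed L₁ → IsClosed L₂ → IsClosed L₃ →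
              Disjoint L₁ L₂ → Disjoint L₁ L₃ → Disjoint L₂ L₃ →
              ∃ W ∈ F, W ∩ L₁ = ∅ ∨ W ∩ L₂ = ∅ ∨ W ∩ L₃ = ∅}) le_rfl
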